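/- For every integer k ≥ 1 the following are equivalent: (1) the vectors W φ^(j)(0) for 0 ≤ j ≤ k−2 are all orthogonal to ker(N₀* − conj(z₀)) (the eigenpath φ has order at least k at 0); (2) there exists ψ ∈ ker(N₀* − conj(z₀)) with ⟨ψ, φ(0)⟩ ≠ 0 such that ⟨ψ, W φ^(j)(0)⟩ = 0 for all 0 ≤ j ≤ k−2; (3) z^(j)(0) = 0 for j = 1, …, k−1; (4) (N₀ − z₀) φ^(j)(0) = −j W φ^(j−1)(0) for j = 1, …, k−1. -/

import Mathlib

open ContinuousLinearMap
open scoped InnerProductSpace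

private lemma itDW_open {H : Type*} [NormedAddCommGroup H] [NormedSpace ℂ H]
    {s : Set ℂ} (hs : IsOpen s) {x : ℂ} (hx : x ∈ s) (n : ℕ) (f : ℂ → H) :
    iteratedDerivWithin n f s x = iteratedDeriv n f x := by
  rw [iteratedDerivWithin_eq_iteratedFDerivWithin, iteratedDeriv_eq_iteratedFDeriv,
    iteratedFDerivWithin_of_isOpen n hs hx]

private lemma binom_recomb {H : Type*} [AddCommMonoid H] [Module ℂ H]
    (a : ℕ → ℂ) (b : ℕ → H) (n : ℕ) :
    (∑ i ∈ Finset.range (n + 1), (n.choose i : ℂ) • (a (i + 1) • b (n - i))) +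
      ∑ i ∈ Finset.range (n + 1), (n.choose i : ℂ) • (a i • b (n + 1 - i)) =
    ∑ i ∈ Finset.range (n + 2), ((n + 1).choose i : ℂ) • (a i • b (n + 1 - i)) := by
  rw [Finset.sum_range_succ' (fun i => ((n + 1).choose i : ℂ) • (a i • b (n + 1 - i))) (n + 1)]
  rw [Finset.sum_range_succ' (fun i => (n.choose i : ℂ) • (a i • b (n + 1 - i))) n]
  have h1 : ∀ i ∈ Finset.range (n + 1),
      (((n + 1).choose (i + 1) : ℂ)) • (a (i + 1) • b (n + 1 - (i + 1))) =
      (n.choose i : ℂ) • (a (i + 1) • b (n - i)) +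
        (n.choose (i + 1) : ℂ) • (a (i + 1) • b (n - i)) := by
    intro i _
    have : n + 1 - (i + 1) = n - i := by omega
    rw [this, Nat.choose_succ_succ]
    push_cast
    rw [add_smul]
  rw [Finset.sum_congr rfl h1, Finset.sum_add_distrib]
  have h2 : ∑ i ∈ Finset.range (n + 1), (n.choose (i + 1) : ℂ) • (a (i + 1) • b (n - i)) =
      ∑ i ∈ Finset.range n, (n.choose (i + 1) : ℂ) • (a (i + 1) • b (n - i)) := by
    rw [Finset.sum_range_succ, Nat.choose_succ_self]
    simp
  have h3 : ∀ i ∈ Finset.range n,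
      (n.choose (i + 1) : ℂ) • (a (i + 1) • b (n + 1 - (i + 1))) =
      (n.choose (i + 1) : ℂ) • (a (i + 1) • b (n - i)) := by
    intro i _
    have h : n + 1 - (i + 1) = n - i := by omega
    rw [h]
  rw [Finset.sum_congr rfl h3] at *
  rw [h2]
  simp [Nat.choose_zero_right]
  abel


private lemma itDW_shift {H : Type*} [NormedAddCommGroup H] [NormedSpace ℂ H]
    {s : Set ℂ} (hs : IsOpen s) {x : ℂ} (hx : x ∈ s) (i : ℕ) (f : ℂ → H) :
    iteratedDerivWithin i (deriv f) s x = iteratedDerivWithin (i + 1) f s x := by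
  rw [iteratedDerivWithin_succ']
  exact (iteratedDerivWithin_congr
    (fun y hy => (derivWithin_of_isOpen hs hy)) hx).symm

private lemma leibniz_smul {H : Type*} [NormedAddCommGroup H] [NormedSpace ℂ H] [CompleteSpace H]
    {s : Set ℂ} (hs : IsOpen s) :
    ∀ (n : ℕ) (f : ℂ → ℂ) (g : ℂ → H), AnalyticOnNhd ℂ f s → AnalyticOnNhd ℂ g s →
      ∀ x ∈ s, iteratedDerivWithin n (fun v => f v • g v) s x =
        ∑ i ∈ Finset.range (n + 1), (n.choose i : ℂ) •
          (iteratedDerivWithin i f s x • iteratedDerivWithin (n - i) g s x) := by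
  have hu : UniqueDiffOn ℂ s := hs.uniqueDiffOn
  intro n
  induction n with
  | zero => intro f g hf hg x hx; simp
  | succ n IH =>
    intro f g hf hg x hx
    have hf' : AnalyticOnNhd ℂ (deriv f) s := hf.deriv
    have hg' : AnalyticOnNhd ℂ (deriv g) s := hg.deriv
    have e1 : Set.EqOn (derivWithin (fun v => f v • g v) s)
        ((fun v => deriv f v • g v) + (fun v => f v • deriv g v)) s := by
      intro y hy
      rw [derivWithin_of_isOpen hs hy,
        deriv_fun_smul (hf y hy).differentiableAt (hg y hy).differentiableAt]
      simp only [Pi.add_apply]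
      abel
    rw [iteratedDerivWithin_succ', iteratedDerivWithin_congr e1 hx,
      iteratedDerivWithin_add hx hu ((hf'.smul hg).contDiffOn hu _ hx) ((hf.smul hg').contDiffOn hu _ hx),
      IH (deriv f) g hf' hg x hx, IH f (deriv g) hf hg' x hx]
    have A : ∑ i ∈ Finset.range (n + 1), (n.choose i : ℂ) •
          (iteratedDerivWithin i (deriv f) s x • iteratedDerivWithin (n - i) g s x) =
        ∑ i ∈ Finset.range (n + 1), (n.choose i : ℂ) •
          (iteratedDerivWithin (i + 1) f s x • iteratedDerivWithin (n - i) g s x) :=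
      Finset.sum_congr rfl fun i _ => by rw [itDW_shift hs hx]
    have B : ∑ i ∈ Finset.range (n + 1), (n.choose i : ℂ) •
          (iteratedDerivWithin i f s x • iteratedDerivWithin (n - i) (deriv g) s x) =
        ∑ i ∈ Finset.range (n + 1), (n.choose i : ℂ) •
          (iteratedDerivWithin i f s x • iteratedDerivWithin (n + 1 - i) g s x) :=
      Finset.sum_congr rfl fun i hi => by
        rw [itDW_shift hs hx]
        have : n - i + 1 = n + 1 - i := by
          have := Finset.mem_range.mp hi; omega
        rw [this]
    rw [A, B, binom_recomb (fun i => iteratedDerivWithin i f s x)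
      (fun i => iteratedDerivWithin i g s x) n]

private lemma itDW_clm {H G : Type*} [NormedAddCommGroup H] [NormedSpace ℂ H] [CompleteSpace H]
    [NormedAddCommGroup G] [NormedSpace ℂ G]
    (T : H →L[ℂ] G) {s : Set ℂ} (hs : IsOpen s) {u : ℂ → H} (hu : AnalyticOnNhd ℂ u s)
    (n : ℕ) {x : ℂ} (hx : x ∈ s) :
    iteratedDerivWithin n (fun v => T (u v)) s x = T (iteratedDerivWithin n u s x) := by
  have h1 : iteratedFDerivWithin ℂ n (T ∘ u) s x =
      T.compContinuousMultilinearMap (iteratedFDerivWithin ℂ n u s x) :=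
    T.iteratedFDerivWithin_comp_left (n := (n : WithTop ℕ∞))
      (hu.contDiffOn hs.uniqueDiffOn _ hx) hs.uniqueDiffOn hx le_rfl
  rw [iteratedDerivWithin_eq_iteratedFDerivWithin, iteratedDerivWithin_eq_iteratedFDerivWithin,
    show (fun v => T (u v)) = T ∘ u from rfl, h1]
  rfl

private lemma itDW_vsmul {H : Type*} [NormedAddCommGroup H] [NormedSpace ℂ H] [CompleteSpace H]
    {s : Set ℂ} (hs : IsOpen s) :
    ∀ (n : ℕ) (u : ℂ → H), AnalyticOnNhd ℂ u s → ∀ x ∈ s,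
      iteratedDerivWithin n (fun v => v • u v) s x =
        x • iteratedDerivWithin n u s x + (n : ℂ) • iteratedDerivWithin (n - 1) u s x := by
  have hu : UniqueDiffOn ℂ s := hs.uniqueDiffOn
  intro n
  induction n with
  | zero => intro u hua x hx; simp
  | succ n IH =>
    intro u hua x hx
    have hu' : AnalyticOnNhd ℂ (deriv u) s := hua.deriv
    have e1 : Set.EqOn (derivWithin (fun v => v • u v) s)
        ((fun v => v • deriv u v) + fun v => u v) s := by
      intro y hy
      rw [derivWithin_of_isOpen hs hy,
        deriv_fun_smul differentiableAt_fun_id (hua y hy).differentiableAt]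
      simp
    rw [iteratedDerivWithin_succ', iteratedDerivWithin_congr e1 hx,
      iteratedDerivWithin_add hx hu (((analyticOnNhd_id).smul hu').contDiffOn hu _ hx)
        (hua.contDiffOn hu _ hx),
      IH (deriv u) hu' x hx, itDW_shift hs hx]
    cases n with
    | zero => simp
    | succ m =>
      rw [show m + 1 - 1 = m from rfl, itDW_shift hs hx,
        show m + 1 + 1 - 1 = m + 1 from rfl]
      push_cast
      match_scalars <;> ring
/-- equivalent characterisations of an eigenpath `φ` of `N_v = N₀ + vW`
having order at least `k` at `v = 0`. -/
theorem eigenpath_order_at_least_tfae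
    {H : Type*} [NormedAddCommGroup H] [InnerProductSpace ℂ H] [CompleteSpace H]
    (N₀ W : H →L[ℂ] H) (ρ : ℝ) (hρ : 0 < ρ)
    (z : ℂ → ℂ) (φ : ℂ → H)
    (hz : AnalyticOnNhd ℂ z (Metric.ball (0 : ℂ) ρ))
    (hφ : AnalyticOnNhd ℂ φ (Metric.ball (0 : ℂ) ρ))
    (heig : ∀ v ∈ Metric.ball (0 : ℂ) ρ, (N₀ + v • W) (φ v) = z v • φ v)
    (hφ0 : φ 0 ≠ 0)
    (z₀ : ℂ) (hz₀ : z₀ = z 0)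
    (φs : H) (hφs : adjoint N₀ φs = (starRingEnd ℂ) z₀ • φs)
    (hφsφ : ⟪φs, φ 0⟫_ℂ ≠ 0)
    (k : ℕ) (hk : 1 ≤ k) :
    [ -- (1) `W φ^(j)(0)`, `0 ≤ j ≤ k-2`, orthogonal to `ker (N₀* - conj z₀)`
      ∀ j : ℕ, j + 2 ≤ k → ∀ ψ : H, adjoint N₀ ψ = (starRingEnd ℂ) z₀ • ψ →
        ⟪ψ, W (iteratedDeriv j φ 0)⟫_ℂ = 0,
      -- (2) they are orthogonal to some adjoint eigenvector not orthogonal to `φ(0)`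
      ∃ ψ : H, adjoint N₀ ψ = (starRingEnd ℂ) z₀ • ψ ∧ ⟪ψ, φ 0⟫_ℂ ≠ 0 ∧
        ∀ j : ℕ, j + 2 ≤ k → ⟪ψ, W (iteratedDeriv j φ 0)⟫_ℂ = 0,
      -- (3) `z^(j)(0) = 0` for `j = 1, …, k-1`
      ∀ j : ℕ, 1 ≤ j → j < k → iteratedDeriv j z 0 = 0,
      -- (4) `(N₀ - z₀) φ^(j)(0) = -j W φ^(j-1)(0)` for `j = 1, …, k-1`
      ∀ j : ℕ, 1 ≤ j → j < k →
        (N₀ - z₀ • (1 : H →L[ℂ] H)) (iteratedDeriv j φ 0) =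
          (-(j : ℂ)) • W (iteratedDeriv (j - 1) φ 0) ].TFAE := by
  set s : Set ℂ := Metric.ball (0 : ℂ) ρ with hsdef
  have hs : IsOpen s := Metric.isOpen_ball
  have hu : UniqueDiffOn ℂ s := hs.uniqueDiffOn
  have h0 : (0 : ℂ) ∈ s := Metric.mem_ball_self hρ
  have hWφ : AnalyticOnNhd ℂ (fun v => W (φ v)) s :=
    fun y hy => (W.analyticAt (φ y)).comp (hφ y hy)
  have hN₀φ : AnalyticOnNhd ℂ (fun v => N₀ (φ v)) s :=
    fun y hy => (N₀.analyticAt (φ y)).comp (hφ y hy)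
  -- the basic derivative identity
  have key : ∀ j : ℕ, N₀ (iteratedDeriv j φ 0) + (j : ℂ) • W (iteratedDeriv (j - 1) φ 0) =
      ∑ i ∈ Finset.range (j + 1), (j.choose i : ℂ) •
        (iteratedDeriv i z 0 • iteratedDeriv (j - i) φ 0) := by
    intro j
    have eq1 : Set.EqOn ((fun v => N₀ (φ v)) + fun v => v • W (φ v)) (fun v => z v • φ v) s := by
      intro y hy
      have := heig y hy
      simpa [ContinuousLinearMap.add_apply, ContinuousLinearMap.smul_apply] using this
    have h1 : iteratedDerivWithin j ((fun v => N₀ (φ v)) + fun v => v • W (φ v)) s 0 =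
        N₀ (iteratedDeriv j φ 0) + (j : ℂ) • W (iteratedDeriv (j - 1) φ 0) := by
      rw [iteratedDerivWithin_add h0 hu (hN₀φ.contDiffOn hu _ h0)
          ((analyticOnNhd_id.smul hWφ).contDiffOn hu _ h0),
        itDW_clm N₀ hs hφ j h0, itDW_vsmul hs j (fun v => W (φ v)) hWφ 0 h0,
        itDW_clm W hs hφ (j - 1) h0, itDW_open hs h0 j φ, itDW_open hs h0 (j - 1) φ]
      simp
    have h2 : iteratedDerivWithin j (fun v => z v • φ v) s 0 =
        ∑ i ∈ Finset.range (j + 1), (j.choose i : ℂ) •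
          (iteratedDeriv i z 0 • iteratedDeriv (j - i) φ 0) := by
      rw [leibniz_smul hs j z φ hz hφ 0 h0]
      exact Finset.sum_congr rfl fun i _ => by
        rw [itDW_open hs h0 i z, itDW_open hs h0 (j - i) φ]
    rw [← h1, ← h2]
    exact iteratedDerivWithin_congr eq1 h0
  -- inner products with adjoint eigenvectors
  have hinner : ∀ ψ : H, adjoint N₀ ψ = (starRingEnd ℂ) z₀ • ψ →
      ∀ x : H, ⟪ψ, N₀ x⟫_ℂ = z₀ * ⟪ψ, x⟫_ℂ := by
    intro ψ hψ x
    rw [← ContinuousLinearMap.adjoint_inner_left, hψ, inner_smul_left]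
    simp
  have hb0 : iteratedDeriv 0 z 0 = z₀ := by rw [iteratedDeriv_zero, hz₀]
  have P : ∀ j : ℕ, ∀ ψ : H, adjoint N₀ ψ = (starRingEnd ℂ) z₀ • ψ →
      (j : ℂ) * ⟪ψ, W (iteratedDeriv (j - 1) φ 0)⟫_ℂ =
      ∑ i ∈ Finset.range j, (j.choose (i + 1) : ℂ) * iteratedDeriv (i + 1) z 0 *
        ⟪ψ, iteratedDeriv (j - 1 - i) φ 0⟫_ℂ := by
    intro j ψ hψ
    have h1 := congrArg (fun y => ⟪ψ, y⟫_ℂ) (key j)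
    simp only [inner_add_right, inner_smul_right, inner_sum] at h1
    rw [hinner ψ hψ] at h1
    rw [Finset.sum_range_succ' (fun i => (j.choose i : ℂ) *
      (iteratedDeriv i z 0 * ⟪ψ, iteratedDeriv (j - i) φ 0⟫_ℂ)) j] at h1
    simp only [Nat.choose_zero_right, Nat.cast_one, one_mul, Nat.sub_zero, hb0] at h1
    have h2 : ∀ i ∈ Finset.range j, (j.choose (i + 1) : ℂ) *
        (iteratedDeriv (i + 1) z 0 * ⟪ψ, iteratedDeriv (j - (i + 1)) φ 0⟫_ℂ) =
        (j.choose (i + 1) : ℂ) * iteratedDeriv (i + 1) z 0 *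
        ⟪ψ, iteratedDeriv (j - 1 - i) φ 0⟫_ℂ := by
      intro i _
      have : j - (i + 1) = j - 1 - i := by omega
      rw [this]; ring
    rw [Finset.sum_congr rfl h2] at h1
    linear_combination h1
  tfae_have 1 → 2 := by
    intro h1
    exact ⟨φs, hφs, hφsφ, fun j hj => h1 j hj φs hφs⟩
  tfae_have 2 → 3 := by
    rintro ⟨ψ, hψ, hψφ, horth⟩ j
    induction j using Nat.strong_induction_on with
    | _ j IH =>
      intro hj1 hjk
      have hP := P j ψ hψ
      rw [horth (j - 1) (by omega)] at hP
      have hzero : ∀ i ∈ Finset.range j, i ≠ j - 1 →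
          (j.choose (i + 1) : ℂ) * iteratedDeriv (i + 1) z 0 *
            ⟪ψ, iteratedDeriv (j - 1 - i) φ 0⟫_ℂ = 0 := by
        intro i hi hne
        have hi' : i + 1 < j := by have := Finset.mem_range.mp hi; omega
        rw [IH (i + 1) hi' (by omega) (by omega)]
        ring
      rw [Finset.sum_eq_single_of_mem (j - 1) (Finset.mem_range.mpr (by omega)) hzero,
        show j - 1 + 1 = j from by omega, Nat.choose_self, Nat.sub_self] at hP
      simp only [Nat.cast_one, one_mul, mul_zero, iteratedDeriv_zero] at hP
      exact (mul_eq_zero.mp hP.symm).resolve_right hψφ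
  tfae_have 3 → 4 := by
    intro h3 j hj1 hjk
    have hk' := key j
    rw [Finset.sum_eq_single_of_mem 0 (Finset.mem_range.mpr (by omega)) (fun i hi hne => by
      rw [h3 i (by omega) (by have := Finset.mem_range.mp hi; omega)]; simp)] at hk'
    rw [Nat.choose_zero_right, hb0] at hk'
    simp only [Nat.cast_one, one_smul, Nat.sub_zero] at hk'
    have h5 := eq_sub_of_add_eq hk'
    rw [ContinuousLinearMap.sub_apply, ContinuousLinearMap.smul_apply,
      ContinuousLinearMap.one_apply, h5]
    module
  tfae_have 4 → 1 := by
    intro h4 j hj ψ hψ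
    have h := h4 (j + 1) (by omega) (by omega)
    rw [Nat.add_sub_cancel] at h
    have h' := congrArg (fun y => ⟪ψ, y⟫_ℂ) h
    simp only [ContinuousLinearMap.sub_apply, ContinuousLinearMap.smul_apply,
      ContinuousLinearMap.one_apply, inner_sub_right, inner_smul_right] at h'
    rw [hinner ψ hψ] at h'
    have hne : (-((j : ℂ) + 1)) ≠ 0 := by
      intro hc
      have : ((j : ℂ) + 1) = 0 := by linear_combination -hc
      exact_mod_cast (Nat.cast_add_one_ne_zero (R := ℂ) j) this
    have hmul : (-(((j : ℕ) + 1 : ℕ) : ℂ)) * ⟪ψ, W (iteratedDeriv j φ 0)⟫_ℂ = 0 := by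
      rw [← h']; ring
    push_cast at hmul
    exact (mul_eq_zero.mp hmul).resolve_left hne
  tfae_finish
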